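/- Let K be an algebraically closed field of characteristic zero, A a K-algebra, and D a K-derivation of A that decomposes as D = D_s + D_n, where D_s and D_n are commuting K-derivations of A, D_n is locally nilpotent, and A decomposes as the direct sum A = ⊕_{λ∈Λ} A_λ of the eigenspaces A_λ = {a ∈ A : D_s(a) = λa} of D_s (Λ being the set of eigenvalues of D_s). Then: (1) the kernel of D is contained in A_0; and (2) the image of D equals D_n(A_0) ⊕ (⊕_{0≠λ∈Λ} A_λ); in particular, A_λ ⊆ D(A) for every nonzero eigenvalue λ. -/

import Mathlib

/-- Let `K` be an algebraically closed field of characteristic zero,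
`A` a `K`-algebra, and `D` a `K`-derivation of `A` decomposing as `D = D_s + D_n`, where
`D_s, D_n` are commuting `K`-derivations of `A`, `D_n` is locally nilpotent, and `A` is
the direct sum of the eigenspaces of `D_s` (expressed as: the eigenspaces of `D_s` span
`A`; eigenspaces for distinct eigenvalues are automatically independent).  Then:
(1) `ker D ⊆ A_0`; and
(2) `im D = D_n(A_0) ⊕ (⊕_{λ≠0} A_λ)`; in particular `A_λ ⊆ im D` for every `λ ≠ 0`. -/
theorem kernel_and_image_of_semisimple_plus_nilpotent_derivation
    {K : Type*} [Field K] [CharZero K] [IsAlgClosed K]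
    {A : Type*} [NonUnitalRing A] [Module K A] [SMulCommClass K A A] [IsScalarTower K A A]
    (D Ds Dn : A →ₗ[K] A)
    (hD : ∀ a b : A, D (a * b) = D a * b + a * D b)
    (hDsder : ∀ a b : A, Ds (a * b) = Ds a * b + a * Ds b)
    (hDnder : ∀ a b : A, Dn (a * b) = Dn a * b + a * Dn b)
    (hcomm : Ds * Dn = Dn * Ds)
    (hLN : ∀ a : A, ∃ m : ℕ, 1 ≤ m ∧ (Dn ^ m) a = 0)
    (hsum : D = Ds + Dn)
    (hdecomp : (⨆ μ : K, Module.End.eigenspace Ds μ) = ⊤) :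
    LinearMap.ker D ≤ Module.End.eigenspace Ds 0 ∧
    LinearMap.range D = Submodule.map Dn (Module.End.eigenspace Ds 0) ⊔
      (⨆ μ : K, ⨆ _ : μ ≠ 0, Module.End.eigenspace Ds μ) ∧
    ∀ μ : K, μ ≠ 0 → Module.End.eigenspace Ds μ ≤ LinearMap.range D := by
  classical
  have hc : Commute Ds Dn := hcomm
  -- Dn preserves each eigenspace of Ds
  have hDnE : ∀ (μ : K) (a : A), a ∈ Module.End.eigenspace Ds μ →
      Dn a ∈ Module.End.eigenspace Ds μ := by
    intro μ a ha
    rw [Module.End.mem_eigenspace_iff] at ha ⊢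
    have h1 : Ds (Dn a) = Dn (Ds a) := by
      have := congrArg (fun f : A →ₗ[K] A => f a) hcomm
      simpa using this
    rw [h1, ha, map_smul]
  -- each nonzero eigenspace is contained in the range of D
  have hrange_ne : ∀ μ : K, μ ≠ 0 → Module.End.eigenspace Ds μ ≤ LinearMap.range D := by
    intro μ hμ
    suffices h : ∀ m : ℕ, ∀ b : A, b ∈ Module.End.eigenspace Ds μ → (Dn ^ m) b = 0 →
        b ∈ LinearMap.range D by
      intro b hb
      obtain ⟨m, -, hm⟩ := hLN b
      exact h m b hb hm
    intro m
    induction m with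
    | zero => intro b _ h0; simp only [pow_zero, Module.End.one_apply] at h0; simp [h0]
    | succ m ih =>
      intro b hb h0
      have hDb : D (μ⁻¹ • b) = b + μ⁻¹ • Dn b := by
        rw [map_smul, hsum]
        have hb' := Module.End.mem_eigenspace_iff.mp hb
        simp only [LinearMap.add_apply, smul_add, hb', smul_smul, inv_mul_cancel₀ hμ, one_smul]
      have hmem : μ⁻¹ • Dn b ∈ LinearMap.range D := by
        refine ih _ (Submodule.smul_mem _ _ (hDnE μ b hb)) ?_
        rw [map_smul]
        have h3 : (Dn ^ m) (Dn b) = (Dn ^ (m + 1)) b := by rw [pow_succ]; rfl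
        rw [h3, h0, smul_zero]
      have hbe : b = D (μ⁻¹ • b) - μ⁻¹ • Dn b := by rw [hDb]; abel
      rw [hbe]
      exact sub_mem (LinearMap.mem_range_self D _) hmem
  -- eigenspace ≤ maxGenEigenspace
  have hEmax : ∀ μ : K, Module.End.eigenspace Ds μ ≤ Module.End.maxGenEigenspace Ds μ := by
    intro μ x hx
    rw [Module.End.mem_maxGenEigenspace]
    refine ⟨1, ?_⟩
    rw [Module.End.mem_eigenspace_iff] at hx
    simp [pow_one, LinearMap.sub_apply, LinearMap.smul_apply, hx]
  -- Part 1
  have part1 : LinearMap.ker D ≤ Module.End.eigenspace Ds 0 := by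
    intro a ha
    rw [LinearMap.mem_ker] at ha
    have hDsa : Ds a = -Dn a := by
      have h4 := congrArg (fun f : A →ₗ[K] A => f a) hsum
      simp only [LinearMap.add_apply] at h4
      rw [ha] at h4
      linear_combination (norm := module) -h4
    have hpow : ∀ m : ℕ, (Ds ^ m) a = ((-1 : K) ^ m) • ((Dn ^ m) a) := by
      intro m
      induction m with
      | zero => simp
      | succ m ih =>
        have hcp : Ds * Dn ^ m = Dn ^ m * Ds := (hc.pow_right m).eq
        have h1 : (Ds ^ (m + 1)) a = Ds ((Ds ^ m) a) := by rw [pow_succ']; rfl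
        rw [h1, ih, map_smul]
        have h2 : Ds ((Dn ^ m) a) = (Dn ^ m) (Ds a) := by
          have := congrArg (fun f : A →ₗ[K] A => f a) hcp
          simpa using this
        rw [h2, hDsa, map_neg]
        have h3 : (Dn ^ m) (Dn a) = (Dn ^ (m + 1)) a := by rw [pow_succ]; rfl
        rw [pow_succ (-1 : K) m, mul_neg_one, neg_smul, smul_neg, h3]
    obtain ⟨m, -, hm⟩ := hLN a
    have hDsm : (Ds ^ m) a = 0 := by rw [hpow m, hm, smul_zero]
    have hamax : a ∈ Module.End.maxGenEigenspace Ds 0 := by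
      rw [Module.End.mem_maxGenEigenspace]
      exact ⟨m, by simpa using hDsm⟩
    have hatop : a ∈ (⨆ μ : K, Module.End.eigenspace Ds μ) := hdecomp ▸ Submodule.mem_top
    have hsplit : (⨆ μ : K, Module.End.eigenspace Ds μ) ≤
        Module.End.eigenspace Ds 0 ⊔
          (⨆ μ : K, ⨆ _ : μ ≠ 0, Module.End.maxGenEigenspace Ds μ) := by
      refine iSup_le fun μ => ?_
      by_cases h : μ = 0
      · subst h; exact le_sup_left
      · exact le_trans (le_trans (hEmax μ)
          (le_iSup₂ (f := fun μ (_ : μ ≠ 0) => Module.End.maxGenEigenspace Ds μ) μ h))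
          le_sup_right
    obtain ⟨b, hb, cx, hcx, hbc⟩ := Submodule.mem_sup.mp (hsplit hatop)
    have hcmax : cx ∈ Module.End.maxGenEigenspace Ds 0 := by
      have hce : cx = a - b := by rw [← hbc]; abel
      rw [hce]
      exact sub_mem hamax (hEmax 0 hb)
    have hind := (Module.End.independent_maxGenEigenspace Ds) 0
    have hc0 : cx = 0 := Submodule.disjoint_def.mp hind cx hcmax hcx
    rw [← hbc, hc0, add_zero]
    exact hb
  refine ⟨part1, ?_, hrange_ne⟩
  apply le_antisymm
  · rintro _ ⟨a, rfl⟩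
    have hatop : a ∈ (⨆ μ : K, Module.End.eigenspace Ds μ) := hdecomp ▸ Submodule.mem_top
    refine Submodule.iSup_induction (motive := fun x => D x ∈
        Submodule.map Dn (Module.End.eigenspace Ds 0) ⊔
          (⨆ μ : K, ⨆ _ : μ ≠ 0, Module.End.eigenspace Ds μ)) _ hatop ?_ (by simp) ?_
    · intro μ x hx
      have hDx : D x = μ • x + Dn x := by
        rw [hsum]
        have hx' := Module.End.mem_eigenspace_iff.mp hx
        simp [LinearMap.add_apply, hx']
      by_cases h : μ = 0
      · subst h
        rw [hDx, zero_smul, zero_add]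
        exact Submodule.mem_sup_left (Submodule.mem_map_of_mem hx)
      · refine Submodule.mem_sup_right ?_
        have hmem : μ • x + Dn x ∈ Module.End.eigenspace Ds μ :=
          add_mem (Submodule.smul_mem _ _ hx) (hDnE μ x hx)
        rw [hDx]
        exact Submodule.mem_iSup_of_mem μ (Submodule.mem_iSup_of_mem h hmem)
    · intro x y hx hy
      rw [map_add]
      exact add_mem hx hy
  · refine sup_le ?_ (iSup_le fun μ => iSup_le fun hμ => hrange_ne μ hμ)
    rintro _ ⟨x, hx, rfl⟩
    refine ⟨x, ?_⟩
    rw [hsum]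
    have hx' := Module.End.mem_eigenspace_iff.mp hx
    simp [LinearMap.add_apply, hx']
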